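/- The tensor product of two distributive join-semilattices with zero is a distributive join-semilattice with zero. Equivalently, if A and B are distributive join-semilattices with zero, then for bi-ideals I, J, K of A × B, (I ∨ J) ∩ K = (I ∩ K) ∨ (J ∩ K). -/
import Mathlib


variable {A B : Type*} [SemilatticeSup A] [OrderBot A] [SemilatticeSup B] [OrderBot B]

/-- A bi-ideal of `A × B`: a downward closed subset containing
`∇ = (A × {0}) ∪ ({0} × B)` that is closed under lateral joins. -/
def IsBiIdeal (I : Set (A × B)) : Prop :=
  (∀ ⦃p q : A × B⦄, q ≤ p → p ∈ I → q ∈ I) ∧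
  (∀ a : A, (a, (⊥ : B)) ∈ I) ∧
  (∀ b : B, ((⊥ : A), b) ∈ I) ∧
  (∀ a₀ a₁ : A, ∀ b : B, (a₀, b) ∈ I → (a₁, b) ∈ I → (a₀ ⊔ a₁, b) ∈ I) ∧
  (∀ a : A, ∀ b₀ b₁ : B, (a, b₀) ∈ I → (a, b₁) ∈ I → (a, b₀ ⊔ b₁) ∈ I)

/-- `∇ = (A × {0}) ∪ ({0} × B)`, the least bi-ideal. -/
def nabla (A B : Type*) [SemilatticeSup A] [OrderBot A] [SemilatticeSup B] [OrderBot B] :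
    Set (A × B) := {p | p.1 = ⊥ ∨ p.2 = ⊥}

/-- The pure tensor `a ⊗ b`. -/
def pureTensor (a : A) (b : B) : Set (A × B) :=
  nabla A B ∪ {p | p.1 ≤ a ∧ p.2 ≤ b}

/-- The bi-ideal generated by a subset `X` of `A × B`. -/
def biGen (X : Set (A × B)) : Set (A × B) := ⋂₀ {K | IsBiIdeal K ∧ X ⊆ K}

/-- The join of two bi-ideals in the lattice of bi-ideals. -/
def biSup (I J : Set (A × B)) : Set (A × B) := biGen (I ∪ J)

/-- Elements of the tensor product `A ⊗ B`: the compact (finitely generated) bi-ideals. -/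
def IsTensorElt (I : Set (A × B)) : Prop := ∃ S : Finset (A × B), I = biGen ↑S

/-- A join-semilattice is distributive if `u ≤ x₀ ⊔ x₁` implies
`u = x₀' ⊔ x₁'` for some `x₀' ≤ x₀`, `x₁' ≤ x₁`. -/
def IsDistribJoinSemilattice (A : Type*) [SemilatticeSup A] : Prop :=
  ∀ u x₀ x₁ : A, u ≤ x₀ ⊔ x₁ → ∃ x₀' x₁' : A, x₀' ≤ x₀ ∧ x₁' ≤ x₁ ∧ u = x₀' ⊔ x₁'

lemma biGen_isBiIdeal (X : Set (A × B)) : IsBiIdeal (biGen X) := by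
  refine ⟨?_, ?_, ?_, ?_, ?_⟩
  · intro p q hqp hp K hK; exact hK.1.1 hqp (hp K hK)
  · intro a K hK; exact hK.1.2.1 a
  · intro b K hK; exact hK.1.2.2.1 b
  · intro a₀ a₁ b h0 h1 K hK; exact hK.1.2.2.2.1 a₀ a₁ b (h0 K hK) (h1 K hK)
  · intro a b₀ b₁ h0 h1 K hK; exact hK.1.2.2.2.2 a b₀ b₁ (h0 K hK) (h1 K hK)

lemma subset_biGen (X : Set (A × B)) : X ⊆ biGen X :=
  fun _ hp K hK => hK.2 hp

lemma biGen_subset {X K : Set (A × B)} (hK : IsBiIdeal K) (hX : X ⊆ K) :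
    biGen X ⊆ K := fun p hp => hp K ⟨hK, hX⟩

/-- The tensor product of distributive semilattices with zero is distributive:
`(I ∨ J) ∩ K = (I ∩ K) ∨ (J ∩ K)` for bi-ideals. -/
theorem tensor_distrib {A B : Type*} [SemilatticeSup A] [OrderBot A]
    [SemilatticeSup B] [OrderBot B]
    (hA : IsDistribJoinSemilattice A) (hB : IsDistribJoinSemilattice B)
    (I J K : Set (A × B)) (hI : IsBiIdeal I) (hJ : IsBiIdeal J) (hK : IsBiIdeal K) :
    biSup I J ∩ K = biSup (I ∩ K) (J ∩ K) := by
  set L := biSup (I ∩ K) (J ∩ K) with hLdef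
  have hL : IsBiIdeal L := biGen_isBiIdeal _
  set M : Set (A × B) := {p | ∀ q : A × B, q ≤ p → q ∈ K → q ∈ L} with hMdef
  have hM : IsBiIdeal M := by
    refine ⟨?_, ?_, ?_, ?_, ?_⟩
    · intro p q hqp hp r hr hrK
      exact hp r (le_trans hr hqp) hrK
    · intro a q hq _
      have h2 : q.2 = ⊥ := le_bot_iff.1 hq.2
      have : (q.1, (⊥ : B)) ∈ L := hL.2.1 q.1
      simpa [← h2] using this
    · intro b q hq _
      have h1 : q.1 = ⊥ := le_bot_iff.1 hq.1
      have := hL.2.2.1 q.2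
      have : ((⊥ : A), q.2) ∈ L := hL.2.2.1 q.2
      simpa [← h1] using this
    · intro a₀ a₁ b hm₀ hm₁ q hq hqK
      obtain ⟨x₀, x₁, hx₀, hx₁, hxeq⟩ := hA q.1 a₀ a₁ hq.1
      have hq₀ : (x₀, q.2) ∈ K := hK.1 (by exact ⟨le_sup_left.trans hxeq.ge, le_rfl⟩) hqK
      have hq₁ : (x₁, q.2) ∈ K := hK.1 (by exact ⟨le_sup_right.trans hxeq.ge, le_rfl⟩) hqK
      have hL₀ : (x₀, q.2) ∈ L := hm₀ (x₀, q.2) ⟨hx₀, hq.2⟩ hq₀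
      have hL₁ : (x₁, q.2) ∈ L := hm₁ (x₁, q.2) ⟨hx₁, hq.2⟩ hq₁
      have := hL.2.2.2.1 x₀ x₁ q.2 hL₀ hL₁
      rwa [← hxeq, Prod.mk.eta] at this
    · intro a b₀ b₁ hm₀ hm₁ q hq hqK
      obtain ⟨y₀, y₁, hy₀, hy₁, hyeq⟩ := hB q.2 b₀ b₁ hq.2
      have hq₀ : (q.1, y₀) ∈ K := hK.1 (by exact ⟨le_rfl, le_sup_left.trans hyeq.ge⟩) hqK
      have hq₁ : (q.1, y₁) ∈ K := hK.1 (by exact ⟨le_rfl, le_sup_right.trans hyeq.ge⟩) hqK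
      have hL₀ : (q.1, y₀) ∈ L := hm₀ (q.1, y₀) ⟨hq.1, hy₀⟩ hq₀
      have hL₁ : (q.1, y₁) ∈ L := hm₁ (q.1, y₁) ⟨hq.1, hy₁⟩ hq₁
      have := hL.2.2.2.2 q.1 y₀ y₁ hL₀ hL₁
      rwa [← hyeq, Prod.mk.eta] at this
  have hIJM : I ∪ J ⊆ M := by
    rintro p (hp | hp) q hq hqK
    · exact subset_biGen _ (Set.mem_union_left _ ⟨hI.1 hq hp, hqK⟩)
    · exact subset_biGen _ (Set.mem_union_right _ ⟨hJ.1 hq hp, hqK⟩)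
  apply Set.Subset.antisymm
  · rintro p ⟨hpIJ, hpK⟩
    exact biGen_subset hM hIJM hpIJ p le_rfl hpK
  · apply biGen_subset
    · exact ⟨fun p q hqp hp => ⟨(biGen_isBiIdeal _).1 hqp hp.1, hK.1 hqp hp.2⟩,
        fun a => ⟨(biGen_isBiIdeal _).2.1 a, hK.2.1 a⟩,
        fun b => ⟨(biGen_isBiIdeal _).2.2.1 b, hK.2.2.1 b⟩,
        fun a₀ a₁ b h0 h1 => ⟨(biGen_isBiIdeal _).2.2.2.1 a₀ a₁ b h0.1 h1.1,
          hK.2.2.2.1 a₀ a₁ b h0.2 h1.2⟩,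
        fun a b₀ b₁ h0 h1 => ⟨(biGen_isBiIdeal _).2.2.2.2 a b₀ b₁ h0.1 h1.1,
          hK.2.2.2.2 a b₀ b₁ h0.2 h1.2⟩⟩
    · rintro p (⟨hpI, hpK⟩ | ⟨hpJ, hpK⟩)
      · exact ⟨subset_biGen _ (Set.mem_union_left _ hpI), hpK⟩
      · exact ⟨subset_biGen _ (Set.mem_union_right _ hpJ), hpK⟩
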